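/- In the minimal counterexample (G, C_0), every vertex of G not on C_0 has degree at least 3. -/

import Mathlib

/-!
Common definitions for formalizing "A relaxation of the Bordeaux Conjecture"
(Liu, Li, Yu).  We model a plane graph combinatorially: a simple graph together
with a set of faces (each given by its boundary cycle, a list of vertices in
cyclic order), a distinguished outer face, and, for each cycle, the sets of
vertices drawn strictly inside and strictly outside of it.

A (2,0,0)-coloring uses colors `0, 1, 2 : Fin 3`, where color `0` is the color
of deficiency 2 (called "color 1" in the paper) and colors `1` and `2` must
induce independent sets.
-/

variable {V : Type} [Fintype V] [DecidableEq V]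

/-- `l` is the list of vertices of a cycle of `G`, in cyclic order. -/
def IsCycleList (G : SimpleGraph V) (l : List V) : Prop :=
  3 ≤ l.length ∧ l.Nodup ∧ ∀ p ∈ l.zip (l.rotate 1), G.Adj p.1 p.2

/-- Two lists represent the same cyclic sequence, up to rotation and reflection. -/
def SameCycle (l l' : List V) : Prop :=
  ∃ n : ℕ, l'.rotate n = l ∨ l'.reverse.rotate n = l

/-- `u` and `v` are consecutive vertices (i.e. joined by an edge) of the cycle `l`. -/
def CycAdj (l : List V) (u v : V) : Prop :=
  (u, v) ∈ l.zip (l.rotate 1) ∨ (v, u) ∈ l.zip (l.rotate 1)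

/-- A combinatorial model of a plane graph. -/
structure PlaneGraph (V : Type) [Fintype V] [DecidableEq V] where
  /-- the underlying abstract simple graph -/
  G : SimpleGraph V
  /-- the faces, given by their boundary cycles -/
  faces : Set (List V)
  /-- the boundary cycle of the outer (unbounded) face -/
  outer : List V
  outer_mem : outer ∈ faces
  faces_cycle : ∀ l ∈ faces, IsCycleList G l
  /-- the set of vertices strictly inside a cycle -/
  inside : List V → Set V
  /-- the set of vertices strictly outside a cycle -/
  outside : List V → Set V
  inside_outside_cover : ∀ l, IsCycleList G l → ∀ v : V,
    v ∈ inside l ∨ v ∈ outside l ∨ v ∈ l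
  inside_outside_disjoint : ∀ l, Disjoint (inside l) (outside l)
  on_cycle_not_inside_outside : ∀ l, ∀ v ∈ l, v ∉ inside l ∧ v ∉ outside l
  no_edge_inside_outside : ∀ l, IsCycleList G l →
    ∀ u ∈ inside l, ∀ v ∈ outside l, ¬ G.Adj u v
  inner_face_inside_empty : ∀ l ∈ faces, ¬ SameCycle l outer → inside l = ∅
  outer_outside_empty : outside outer = ∅

namespace PlaneGraph

/-- `l` is the boundary cycle of a face of `P` (up to rotation/reflection). -/
def IsFace (P : PlaneGraph V) (l : List V) : Prop :=
  ∃ l' ∈ P.faces, SameCycle l l'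

/-- The degree of a vertex. -/
noncomputable def deg (P : PlaneGraph V) (v : V) : ℕ :=
  {u | P.G.Adj v u}.ncard

/-- A separating cycle: there are vertices strictly inside and strictly outside. -/
def Separating (P : PlaneGraph V) (l : List V) : Prop :=
  IsCycleList P.G l ∧ (P.inside l).Nonempty ∧ (P.outside l).Nonempty

end PlaneGraph

/-- `a`, `b`, `c` span a triangle of `G`. -/
def IsTriangle (G : SimpleGraph V) (a b c : V) : Prop :=
  G.Adj a b ∧ G.Adj b c ∧ G.Adj c a

/-- `v` is incident to (i.e. lies on) some triangle of `G`. -/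
def OnTriangle (G : SimpleGraph V) (v : V) : Prop :=
  ∃ a b : V, IsTriangle G v a b

/-- `G` contains no cycle of length 5. -/
def NoFiveCycle (G : SimpleGraph V) : Prop :=
  ∀ l : List V, IsCycleList G l → l.length ≠ 5

/-- No two distinct triangles of `G` share a vertex. -/
def NoIntersectingTriangles (G : SimpleGraph V) : Prop :=
  ∀ a b c d e f : V, IsTriangle G a b c → IsTriangle G d e f →
    (({a, b, c} : Set V) ∩ ({d, e, f} : Set V)).Nonempty →
    ({a, b, c} : Set V) = ({d, e, f} : Set V)

/-- Membership in the family `𝒢` of plane graphs with no 5-cycles and no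
two triangles sharing a vertex. -/
def PlaneGraph.InFamilyG (P : PlaneGraph V) : Prop :=
  NoFiveCycle P.G ∧ NoIntersectingTriangles P.G

/-- A (2,0,0)-coloring of `G`: color `0` induces a subgraph of maximum degree
at most `2`, and colors `1` and `2` induce independent sets. -/
def IsCol200 (G : SimpleGraph V) (c : V → Fin 3) : Prop :=
  (∀ u v : V, G.Adj u v → c u ≠ 0 → c u ≠ c v) ∧
  (∀ v : V, c v = 0 → {u | G.Adj v u ∧ c u = 0}.ncard ≤ 2)

/-- A (2,0,0)-coloring of the cycle `l`, viewed as a subgraph. -/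
def IsCol200Cycle (l : List V) (c : V → Fin 3) : Prop :=
  (∀ u v : V, CycAdj l u v → c u ≠ 0 → c u ≠ c v) ∧
  (∀ v ∈ l, c v = 0 → {u | CycAdj l u v ∧ c u = 0}.ncard ≤ 2)

/-- `c` agrees with `c₀` on the cycle `l` and every vertex off `l` receives a
color different from those of all of its neighbors on `l`. -/
def SuperextendsOn (G : SimpleGraph V) (l : List V) (c₀ c : V → Fin 3) : Prop :=
  (∀ v ∈ l, c v = c₀ v) ∧ ∀ v : V, v ∉ l → ∀ u ∈ l, G.Adj v u → c v ≠ c u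

/-- `(G, l)` is superextendable: every (2,0,0)-coloring of the cycle `l` extends to
a (2,0,0)-coloring of `G` in which every vertex off `l` gets a color different from
those of all of its neighbors on `l`. -/
def Superextendable (G : SimpleGraph V) (l : List V) : Prop :=
  ∀ c₀ : V → Fin 3, IsCol200Cycle l c₀ →
    ∃ c : V → Fin 3, IsCol200 G c ∧ SuperextendsOn G l c₀ c

/-- `σ(G) = |V(G)| + |E(G)|`. -/
noncomputable def PlaneGraph.sigma (P : PlaneGraph V) : ℕ :=
  Fintype.card V + P.G.edgeSet.ncard

/-- `(P, C₀)` is a counterexample to the main theorem that minimizes `σ`: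
`P` is a plane graph in `𝒢`, `C₀` is a triangle or a 7-cycle of `P`,
`(P, C₀)` is not superextendable, and every pair `(P', C')` of this kind with
smaller `σ` is superextendable. -/
def IsMinCex (P : PlaneGraph V) (C₀ : List V) : Prop :=
  P.InFamilyG ∧ IsCycleList P.G C₀ ∧ (C₀.length = 3 ∨ C₀.length = 7) ∧
  ¬ Superextendable P.G C₀ ∧
  ∀ (n : ℕ) (P' : PlaneGraph (Fin n)) (C' : List (Fin n)),
    P'.InFamilyG → IsCycleList P'.G C' → (C'.length = 3 ∨ C'.length = 7) →
    P'.sigma < P.sigma → Superextendable P'.G C'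

/-- The graph obtained from `G` by identifying the vertices `u` and `w` (the merged
vertex is `u`; the vertex `w` becomes isolated). -/
def identify (G : SimpleGraph V) (u w : V) : SimpleGraph V where
  Adj x y := x ≠ y ∧ x ≠ w ∧ y ≠ w ∧
    (G.Adj x y ∨ (x = u ∧ G.Adj w y) ∨ (y = u ∧ G.Adj x w))
  symm := by
    constructor
    rintro x y ⟨hxy, hxw, hyw, h⟩
    refine ⟨hxy.symm, hyw, hxw, ?_⟩
    rcases h with h | ⟨hx, h⟩ | ⟨hy, h⟩
    · exact Or.inl h.symm
    · exact Or.inr (Or.inr ⟨hx, h.symm⟩)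
    · exact Or.inr (Or.inl ⟨hy, h.symm⟩)
  loopless := by
    constructor
    rintro x ⟨hxx, -⟩
    exact hxx rfl

/-- The graph obtained from `G` by deleting the vertices of `S`
(the deleted vertices become isolated). -/
def delVerts (G : SimpleGraph V) (S : Set V) : SimpleGraph V where
  Adj x y := G.Adj x y ∧ x ∉ S ∧ y ∉ S
  symm := ⟨fun _ _ h => ⟨h.1.symm, h.2.2, h.2.1⟩⟩
  loopless := ⟨fun x h => G.loopless.irrefl x h.1⟩

/-- Base special 3-faces: `(3,3,5⁻)`-faces and `(3,4,4)`-faces disjoint from `C₀`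
(the first listed vertex is a 3-vertex). -/
def IsBaseSpecial (P : PlaneGraph V) (C₀ : List V) (u v w : V) : Prop :=
  P.IsFace [u, v, w] ∧ u ∉ C₀ ∧ v ∉ C₀ ∧ w ∉ C₀ ∧ P.deg u = 3 ∧
    ((P.deg v = 3 ∧ P.deg w ≤ 5) ∨ (P.deg v = 4 ∧ P.deg w = 4))

/-- Special 3-faces of rank at most `n`, following the paper's recursive
definition: the base special faces are the `(3,3,5⁻)`- and `(3,4,4)`-faces
disjoint from `C₀`; a `(3,5,5)`-face `uvw` (disjoint from `C₀`, with `d(u)=3`)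
is special of rank `n+1` when each off-face neighbor of each of its two
5-vertices is a 3-vertex lying on a pendant special 3-face of rank at most `n`,
i.e. the two 5-vertices have six pendant special 3-faces altogether. -/
def SpecialRank (P : PlaneGraph V) (C₀ : List V) : ℕ → V → V → V → Prop
  | 0 => fun u v w => IsBaseSpecial P C₀ u v w
  | n + 1 => fun u v w =>
      SpecialRank P C₀ n u v w ∨
      (P.IsFace [u, v, w] ∧ u ∉ C₀ ∧ v ∉ C₀ ∧ w ∉ C₀ ∧
        P.deg u = 3 ∧ P.deg v = 5 ∧ P.deg w = 5 ∧
        (∀ x : V, P.G.Adj v x → x ≠ u → x ≠ w →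
          ∃ a b c : V, SpecialRank P C₀ n a b c ∧ v ≠ a ∧ v ≠ b ∧ v ≠ c ∧
            (x = a ∨ x = b ∨ x = c) ∧ P.deg x = 3) ∧
        (∀ x : V, P.G.Adj w x → x ≠ u → x ≠ v →
          ∃ a b c : V, SpecialRank P C₀ n a b c ∧ w ≠ a ∧ w ≠ b ∧ w ≠ c ∧
            (x = a ∨ x = b ∨ x = c) ∧ P.deg x = 3))

/-- `uvw` is a special 3-face (of some rank). -/
def IsSpecial (P : PlaneGraph V) (C₀ : List V) (u v w : V) : Prop :=
  ∃ n : ℕ, SpecialRank P C₀ n u v w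

/-- The set `S` is the vertex set of a special 3-face. -/
def IsSpecialOn (P : PlaneGraph V) (C₀ : List V) (S : Set V) : Prop :=
  ∃ a b c : V, IsSpecial P C₀ a b c ∧ S = {a, b, c}

/-- `S` is the vertex set of a pendant special 3-face of `y`:  a special 3-face
not containing `y` one of whose 3-vertices is adjacent to `y`. -/
def PendantSpecial (P : PlaneGraph V) (C₀ : List V) (y : V) (S : Set V) : Prop :=
  IsSpecialOn P C₀ S ∧ y ∉ S ∧ ∃ x ∈ S, P.deg x = 3 ∧ P.G.Adj y x

/-- The number of pendant special 3-faces of `y`. -/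
noncomputable def pendCount (P : PlaneGraph V) (C₀ : List V) (y : V) : ℕ :=
  {S : Set V | PendantSpecial P C₀ y S}.ncard


section AuxForMinDeg

lemma cycAdj_zip_map {W V : Type} {f : W → V} (hf : Function.Injective f) (l : List W) (a b : W) :
    ((f a, f b) ∈ (l.map f).zip ((l.map f).rotate 1)) ↔ (a, b) ∈ l.zip (l.rotate 1) := by
  rw [← List.map_rotate, List.zip_map]
  constructor
  · intro hmem
    obtain ⟨⟨x, y⟩, hxy, heq⟩ := List.mem_map.1 hmem
    simp only [Prod.map, Prod.mk.injEq] at heq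
    rw [← hf heq.1, ← hf heq.2]
    exact hxy
  · intro hmem; exact List.mem_map_of_mem hmem

lemma cycAdj_map_iff {W V : Type} {f : W → V} (hf : Function.Injective f) (l : List W) (u w : W) :
    CycAdj l u w ↔ CycAdj (l.map f) (f u) (f w) := by
  unfold CycAdj
  rw [cycAdj_zip_map hf, cycAdj_zip_map hf]

lemma isCycleList_map_iff {W V : Type} {f : W → V} (hf : Function.Injective f)
    {G : SimpleGraph V} {H : SimpleGraph W} (hadj : ∀ i j, H.Adj i j ↔ G.Adj (f i) (f j))
    (l : List W) : IsCycleList H l ↔ IsCycleList G (l.map f) := by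
  constructor
  · rintro ⟨h1, h2, h3⟩
    refine ⟨by simpa using h1, h2.map hf, ?_⟩
    intro p hp
    rw [← List.map_rotate, List.zip_map] at hp
    obtain ⟨⟨a, b⟩, hab, rfl⟩ := List.mem_map.1 hp
    exact (hadj a b).1 (h3 _ hab)
  · rintro ⟨h1, h2, h3⟩
    refine ⟨by simpa using h1, List.Nodup.of_map f h2, ?_⟩
    rintro ⟨a, b⟩ hab
    exact (hadj a b).2 (h3 (f a, f b) ((cycAdj_zip_map hf l a b).2 hab))

lemma exists_color_notmem (S : Set (Fin 3)) (hS : S.ncard ≤ 2) : ∃ k, k ∉ S := by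
  by_contra hcon
  push_neg at hcon
  have : S = Set.univ := Set.eq_univ_of_forall hcon
  rw [this, Set.ncard_univ] at hS
  simp at hS

end AuxForMinDeg

/-- In the minimal counterexample `(G, C₀)`, every vertex of `G`
not on `C₀` has degree at least 3. -/
theorem mincex_min_degree_three
    (P : PlaneGraph V) (C₀ : List V) (h : IsMinCex P C₀) :
    ∀ v : V, v ∉ C₀ → 3 ≤ P.deg v := by
  intro v hv
  by_contra hdeg
  push_neg at hdeg
  have hN2 : {u | P.G.Adj v u}.ncard ≤ 2 := by
    have h2 : P.deg v ≤ 2 := by omega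
    unfold PlaneGraph.deg at h2
    exact h2
  obtain ⟨hfam, hcyc, hlen, hnse, hmin⟩ := h
  -- the smaller graph obtained by deleting `v`
  set m := Fintype.card {x : V // x ≠ v} with hm
  let e : {x : V // x ≠ v} ≃ Fin m := Fintype.equivFin _
  set f : Fin m → V := fun i => (e.symm i).1 with hf
  have hfinj : Function.Injective f := fun a b hab => e.symm.injective (Subtype.ext hab)
  have hfv : ∀ i, f i ≠ v := fun i => (e.symm i).2
  set g : ∀ x : V, x ≠ v → Fin m := fun x hx => e ⟨x, hx⟩ with hg
  have hfg : ∀ x hx, f (g x hx) = x := fun x hx => by simp [hf, hg]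
  set H : SimpleGraph (Fin m) := P.G.comap f with hH
  have hadj : ∀ i j, H.Adj i j ↔ P.G.Adj (f i) (f j) := fun i j => Iff.rfl
  have hadjg : ∀ (x y : V) (hx : x ≠ v) (hy : y ≠ v),
      P.G.Adj x y ↔ H.Adj (g x hx) (g y hy) := by
    intro x y hx hy
    rw [hadj, hfg, hfg]
  -- the image of C₀
  have hC0v : ∀ x ∈ C₀, x ≠ v := fun x hx hxv => hv (hxv ▸ hx)
  set C₀' : List (Fin m) := C₀.attach.map (fun x => g x.1 (hC0v x.1 x.2)) with hC0'
  have hC0map : C₀'.map f = C₀ := by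
    rw [hC0', List.map_map]
    have heq : (f ∘ fun x : {a // a ∈ C₀} => g x.1 (hC0v x.1 x.2)) = Subtype.val := by
      funext x; exact hfg _ _
    rw [heq, List.attach_map_subtype_val]
  have hcycH : IsCycleList H C₀' := by
    rw [isCycleList_map_iff hfinj hadj, hC0map]
    exact hcyc
  have hmemC0' : ∀ (x : V) (hx : x ∈ C₀) (hxv : x ≠ v), g x hxv ∈ C₀' := by
    intro x hx hxv
    rw [← hC0map] at hx
    obtain ⟨j, hj, hjx⟩ := List.mem_map.1 hx
    have hje : j = g x hxv := hfinj (by rw [hjx, hfg])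
    rwa [← hje]
  have hnmemC0' : ∀ (x : V) (hxv : x ≠ v), x ∉ C₀ → g x hxv ∉ C₀' := by
    intro x hxv hx hmem
    exact hx (by rw [← hC0map]; exact (hfg x hxv) ▸ List.mem_map_of_mem (f := f) hmem)
  -- the smaller plane graph
  let P' : PlaneGraph (Fin m) :=
    { G := H
      faces := {C₀'}
      outer := C₀'
      outer_mem := rfl
      faces_cycle := by rintro l rfl; exact hcycH
      inside := fun l => {x | x ∉ l}
      outside := fun _ => ∅
      inside_outside_cover := by
        intro l _ x
        by_cases hx : x ∈ l
        · exact Or.inr (Or.inr hx)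
        · exact Or.inl hx
      inside_outside_disjoint := fun l => Set.disjoint_empty _
      on_cycle_not_inside_outside := by
        intro l x hx
        exact ⟨fun hc => hc hx, Set.notMem_empty x⟩
      no_edge_inside_outside := by
        intro l _ u _ w hw
        exact absurd hw (Set.notMem_empty w)
      inner_face_inside_empty := by
        rintro l rfl hne
        exact absurd ⟨0, Or.inl (List.rotate_zero _)⟩ hne
      outer_outside_empty := rfl }
  have hPG : P'.G = H := rfl
  -- P' is in the family
  have hfam' : P'.InFamilyG := by
    constructor
    · intro l hl
      rw [hPG, isCycleList_map_iff hfinj hadj] at hl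
      have := hfam.1 _ hl
      simpa using this
    · intro a b c d e' f' h1 h2 hne
      have h1' : IsTriangle P.G (f a) (f b) (f c) :=
        ⟨(hadj a b).1 h1.1, (hadj b c).1 h1.2.1, (hadj c a).1 h1.2.2⟩
      have h2' : IsTriangle P.G (f d) (f e') (f f') :=
        ⟨(hadj d e').1 h2.1, (hadj e' f').1 h2.2.1, (hadj f' d).1 h2.2.2⟩
      have himg1 : f '' ({a, b, c} : Set (Fin m)) = {f a, f b, f c} := by
        simp [Set.image_insert_eq]
      have himg2 : f '' ({d, e', f'} : Set (Fin m)) = {f d, f e', f f'} := by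
        simp [Set.image_insert_eq]
      have hne' : (({f a, f b, f c} : Set V) ∩ {f d, f e', f f'}).Nonempty := by
        obtain ⟨x, hx1, hx2⟩ := hne
        exact ⟨f x, himg1 ▸ Set.mem_image_of_mem f hx1, himg2 ▸ Set.mem_image_of_mem f hx2⟩
      have := hfam.2 _ _ _ _ _ _ h1' h2' hne'
      rw [← himg1, ← himg2] at this
      exact (Set.image_eq_image hfinj).1 this
  -- C₀' is a 3- or 7-cycle
  have hlenC0' : C₀'.length = 3 ∨ C₀'.length = 7 := by
    have : C₀'.length = C₀.length := by
      simpa using congrArg List.length hC0map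
    rw [this]; exact hlen
  -- sigma decreases
  have hmcard : m = Fintype.card V - 1 := by
    rw [hm]
    have : Fintype.card {x : V // ¬ x = v} = Fintype.card V - Fintype.card {x : V // x = v} :=
      Fintype.card_subtype_compl _
    rw [Fintype.card_subtype_eq] at this
    exact this
  have hVpos : 1 ≤ Fintype.card V := Fintype.card_pos_iff.2 ⟨v⟩
  have hedge : H.edgeSet.ncard ≤ P.G.edgeSet.ncard := by
    have hsub : Sym2.map f '' H.edgeSet ⊆ P.G.edgeSet := by
      rintro s ⟨t, ht, rfl⟩
      induction t with
      | _ i j =>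
        simp only [Sym2.map_pair_eq]
        exact (hadj i j).1 ht
    calc H.edgeSet.ncard = (Sym2.map f '' H.edgeSet).ncard :=
          (Set.ncard_image_of_injective _ (Sym2.map.injective hfinj)).symm
      _ ≤ P.G.edgeSet.ncard := Set.ncard_le_ncard hsub (Set.toFinite _)
  have hsig : P'.sigma < P.sigma := by
    unfold PlaneGraph.sigma
    have hcardFin : Fintype.card (Fin m) = m := Fintype.card_fin m
    rw [hcardFin]
    have hPGe : P'.G.edgeSet.ncard = H.edgeSet.ncard := rfl
    rw [hPGe]
    omega
  -- minimality gives superextendability of the smaller graph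
  have hsup : Superextendable H C₀' := hmin m P' C₀' hfam' hcycH hlenC0' hsig
  -- contradiction: (P, C₀) is superextendable
  apply hnse
  intro c₀ hc₀
  set c₀' : Fin m → Fin 3 := fun i => c₀ (f i) with hc₀'def
  have hfxC0 : ∀ x ∈ C₀', f x ∈ C₀ := by
    intro x hx
    rw [← hC0map]
    exact List.mem_map_of_mem (f := f) hx
  have hc₀'col : IsCol200Cycle C₀' c₀' := by
    constructor
    · intro i j hij hne
      have hij' : CycAdj C₀ (f i) (f j) := by
        rw [← hC0map]
        exact (cycAdj_map_iff hfinj C₀' i j).1 hij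
      exact hc₀.1 (f i) (f j) hij' hne
    · intro x hx hx0
      have hsub : f '' {u | CycAdj C₀' u x ∧ c₀' u = 0} ⊆
          {u | CycAdj C₀ u (f x) ∧ c₀ u = 0} := by
        rintro u ⟨j, ⟨hj1, hj2⟩, rfl⟩
        refine ⟨?_, hj2⟩
        rw [← hC0map]
        exact (cycAdj_map_iff hfinj C₀' j x).1 hj1
      calc {u | CycAdj C₀' u x ∧ c₀' u = 0}.ncard
          = (f '' {u | CycAdj C₀' u x ∧ c₀' u = 0}).ncard :=
            (Set.ncard_image_of_injective _ hfinj).symm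
        _ ≤ {u | CycAdj C₀ u (f x) ∧ c₀ u = 0}.ncard :=
            Set.ncard_le_ncard hsub (Set.toFinite _)
        _ ≤ 2 := hc₀.2 (f x) (hfxC0 x hx) hx0
  obtain ⟨c', hc'col, hc'agree, hc'ext⟩ := hsup c₀' hc₀'col
  -- extend the coloring back to G, choosing a suitable color for v
  set cc : V → Fin 3 := fun x => if hx : x = v then 0 else c' (g x hx) with hccdef
  have hccne : ∀ (x : V) (hx : x ≠ v), cc x = c' (g x hx) := by
    intro x hx; simp [hccdef, hx]
  obtain ⟨k, hk⟩ := exists_color_notmem (cc '' {u | P.G.Adj v u})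
    (le_trans (Set.ncard_image_le (Set.toFinite _)) hN2)
  set c : V → Fin 3 := Function.update cc v k with hcdef
  have hcx : ∀ (x : V) (hx : x ≠ v), c x = c' (g x hx) := by
    intro x hx
    rw [hcdef, Function.update_of_ne hx]
    exact hccne x hx
  have hcv : c v = k := by rw [hcdef, Function.update_self]
  have hvne : ∀ u, P.G.Adj v u → c u ≠ c v := by
    intro u hu hcon
    have huv : u ≠ v := fun hh => P.G.loopless.irrefl v (hh ▸ hu)
    rw [hcv, hcdef, Function.update_of_ne huv] at hcon
    exact hk ⟨u, hu, hcon⟩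
  refine ⟨c, ⟨?_, ?_⟩, ?_, ?_⟩
  · -- first coloring condition
    intro x y hxy hx0
    by_cases hxv : x = v
    · subst hxv
      exact fun hh => hvne y hxy hh.symm
    · by_cases hyv : y = v
      · subst hyv
        exact hvne x hxy.symm
      · rw [hcx x hxv, hcx y hyv]
        rw [hcx x hxv] at hx0
        exact hc'col.1 _ _ ((hadjg x y hxv hyv).1 hxy) hx0
  · -- second coloring condition
    intro x hx0
    by_cases hxv : x = v
    · subst hxv
      have hemp : {u | P.G.Adj x u ∧ c u = 0} = ∅ := by
        ext u
        simp only [Set.mem_setOf_eq, Set.mem_empty_iff_false, iff_false, not_and]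
        intro hu hu0
        exact hvne u hu (hu0.trans hx0.symm)
      rw [hemp]
      simp
    · have hsub : {u | P.G.Adj x u ∧ c u = 0} ⊆
          f '' {j | H.Adj (g x hxv) j ∧ c' j = 0} := by
        rintro u ⟨hu, hu0⟩
        have huv : u ≠ v := by
          rintro rfl
          exact hvne x hu.symm (hx0.trans hu0.symm)
        exact ⟨g u huv, ⟨(hadjg x u hxv huv).1 hu, (hcx u huv) ▸ hu0⟩, hfg u huv⟩
      calc {u | P.G.Adj x u ∧ c u = 0}.ncard
          ≤ (f '' {j | H.Adj (g x hxv) j ∧ c' j = 0}).ncard :=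
            Set.ncard_le_ncard hsub (Set.toFinite _)
        _ = {j | H.Adj (g x hxv) j ∧ c' j = 0}.ncard :=
            Set.ncard_image_of_injective _ hfinj
        _ ≤ 2 := hc'col.2 (g x hxv) ((hcx x hxv) ▸ hx0)
  · -- agreement on C₀
    intro x hxC
    have hxv := hC0v x hxC
    rw [hcx x hxv, hc'agree (g x hxv) (hmemC0' x hxC hxv), hc₀'def]
    simp only []
    rw [hfg]
  · -- superextension property
    intro x hxC u huC hadjxu
    by_cases hxv : x = v
    · subst hxv
      exact fun hh => hvne u hadjxu hh.symm
    · have huv := hC0v u huC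
      rw [hcx x hxv, hcx u huv]
      exact hc'ext (g x hxv) (hnmemC0' x hxv hxC) (g u huv) (hmemC0' u huC huv)
        ((hadjg x u hxv huv).1 hadjxu)
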